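/- arXiv:2504.09204 — 3 statements merged into one kernel-verified Lean document; each statement's English description precedes it below -/
import Mathlib

section
/- Let m ≥ 2 be an integer. Then R(m), the set of all roots of C_n whose height is divisible by m, is of Levi type: there exist an element w of the Weyl group W and a subset S of the simple roots {α_1,…,α_n} such that w maps R(m) bijectively onto R ∩ span_ℝ(S). -/
noncomputable section

/-- The standard basis vector `ε_{i+1}` of `ℝ^n` (0-based index `i`). -/
def eps (n : ℕ) (i : Fin n) : Fin n → ℝ := fun j => if j = i then 1 else 0

/-- The root system of type `Cₙ`. -/
def Croots (n : ℕ) : Set (Fin n → ℝ) :=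
  {v | (∃ i j : Fin n, i < j ∧
         (v = eps n j - eps n i ∨ v = -(eps n j - eps n i) ∨
          v = eps n j + eps n i ∨ v = -(eps n j + eps n i))) ∨
       (∃ i : Fin n, v = (2 : ℝ) • eps n i ∨ v = -((2 : ℝ) • eps n i))}

/-- The height functional for type `Cₙ`. -/
def htC (n : ℕ) (v : Fin n → ℝ) : ℝ := ∑ i : Fin n, v i * ((i : ℝ) + 1 / 2)

/-- The simple roots of `Cₙ`: `α_1 = 2ε_1` and `α_i = ε_i − ε_{i−1}` for `2 ≤ i ≤ n`
(written with 0-based indices). -/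
def CsimpleSet (n : ℕ) : Set (Fin n → ℝ) :=
  {v | (∃ i : Fin n, (i : ℕ) = 0 ∧ v = (2 : ℝ) • eps n i) ∨
       (∃ i j : Fin n, (j : ℕ) = (i : ℕ) + 1 ∧ v = eps n j - eps n i)}

/-- The Weyl group of `Cₙ`: the subgroup of `GL(ℝ^n)` (realized as linear
automorphisms of `ℝ^n`) generated by the reflections
`s_γ : v ↦ v − (2⟨v,γ⟩/⟨γ,γ⟩)γ` for roots `γ`. -/
def CWeyl (n : ℕ) : Subgroup ((Fin n → ℝ) ≃ₗ[ℝ] (Fin n → ℝ)) :=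
  Subgroup.closure {σ | ∃ γ ∈ Croots n,
    ∀ v, σ v = v - ((2 * ∑ i, v i * γ i) / (∑ i, γ i * γ i)) • γ}

lemma sum_eps_mul (n : ℕ) (i : Fin n) (c : Fin n → ℝ) : ∑ k, eps n i k * c k = c i := by
  simp [eps, ite_mul]

def negE (n : ℕ) (s : Fin n → ℝ) (hs : ∀ i, s i * s i = 1) :
    (Fin n → ℝ) ≃ₗ[ℝ] (Fin n → ℝ) where
  toFun v := fun j => s j * v j
  invFun v := fun j => s j * v j
  left_inv v := funext fun j => by show s j * (s j * v j) = v j; rw [← mul_assoc, hs, one_mul]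
  right_inv v := funext fun j => by show s j * (s j * v j) = v j; rw [← mul_assoc, hs, one_mul]
  map_add' u v := funext fun j => by show s j * (u j + v j) = s j * u j + s j * v j; ring
  map_smul' c v := funext fun j => by show s j * (c * v j) = c * (s j * v j); ring

def permE (n : ℕ) (σ : Equiv.Perm (Fin n)) : (Fin n → ℝ) ≃ₗ[ℝ] (Fin n → ℝ) where
  toFun v := v ∘ σ
  invFun v := v ∘ ⇑(σ⁻¹)
  left_inv v := funext fun j => by show v (σ (σ⁻¹ j)) = v j; simp
  right_inv v := funext fun j => by show v (σ⁻¹ (σ j)) = v j; simp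
  map_add' u v := rfl
  map_smul' c v := rfl

lemma gen_mem {n : ℕ} (σ : (Fin n → ℝ) ≃ₗ[ℝ] (Fin n → ℝ)) (γ : Fin n → ℝ) (hγ : γ ∈ Croots n)
    (h : ∀ v, σ v = v - ((2 * ∑ i, v i * γ i) / (∑ i, γ i * γ i)) • γ) : σ ∈ CWeyl n :=
  Subgroup.subset_closure ⟨γ, hγ, h⟩

def pmFun (n : ℕ) (F : Finset (Fin n)) : Fin n → ℝ := fun k => if k ∈ F then -1 else 1

lemma pmFun_sq (n : ℕ) (F : Finset (Fin n)) : ∀ k, pmFun n F k * pmFun n F k = 1 := by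
  intro k; unfold pmFun; split <;> norm_num

lemma flip_mem (n : ℕ) (i : Fin n) :
    negE n (pmFun n {i}) (pmFun_sq n {i}) ∈ CWeyl n := by
  have hif : ∀ k : Fin n, pmFun n {i} k = if k = i then (-1:ℝ) else 1 := by
    intro k; simp [pmFun]
  apply gen_mem _ ((2:ℝ) • eps n i) (Or.inr ⟨i, Or.inl rfl⟩)
  intro v
  have h1 : ∑ k, v k * ((2:ℝ) • eps n i) k = 2 * v i := by
    simp only [Pi.smul_apply, smul_eq_mul]
    have : ∀ k, v k * (2 * eps n i k) = eps n i k * (2 * v k) := by intro k; ring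
    rw [Finset.sum_congr rfl (fun k _ => this k), sum_eps_mul]
  have h2 : ∑ k, ((2:ℝ) • eps n i) k * ((2:ℝ) • eps n i) k = 4 := by
    simp only [Pi.smul_apply, smul_eq_mul]
    have : ∀ k, (2 * eps n i k) * (2 * eps n i k) = eps n i k * (4 * eps n i k) := by intro k; ring
    rw [Finset.sum_congr rfl (fun k _ => this k), sum_eps_mul]
    simp [eps]
  rw [h1, h2]
  funext k
  show pmFun n {i} k * v k = _
  rw [hif]
  have hc : (2 * (2 * v i)) / 4 = v i := by ring
  simp only [Pi.sub_apply, Pi.smul_apply, smul_eq_mul, hc, eps]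
  by_cases hk : k = i <;> simp [hk] <;> ring

lemma swap_mem (n : ℕ) (i j : Fin n) (hij : i ≠ j) : permE n (Equiv.swap i j) ∈ CWeyl n := by
  have hγ : eps n j - eps n i ∈ Croots n := by
    rcases lt_or_gt_of_ne hij with h | h
    · exact Or.inl ⟨i, j, h, Or.inl rfl⟩
    · exact Or.inl ⟨j, i, h, Or.inr (Or.inl (by abel))⟩
  apply gen_mem _ (eps n j - eps n i) hγ
  intro v
  have h1 : ∑ k, v k * (eps n j - eps n i) k = v j - v i := by
    simp only [Pi.sub_apply, mul_sub]
    rw [Finset.sum_sub_distrib]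
    have e1 : ∀ k, v k * eps n j k = eps n j k * v k := fun k => mul_comm _ _
    have e2 : ∀ k, v k * eps n i k = eps n i k * v k := fun k => mul_comm _ _
    rw [Finset.sum_congr rfl (fun k _ => e1 k), Finset.sum_congr rfl (fun k _ => e2 k),
      sum_eps_mul, sum_eps_mul]
  have h2 : ∑ k, (eps n j - eps n i) k * (eps n j - eps n i) k = 2 := by
    have : ∀ k, (eps n j - eps n i) k * (eps n j - eps n i) k
        = eps n j k * (eps n j k - eps n i k) - eps n i k * (eps n j k - eps n i k) := by
      intro k; simp only [Pi.sub_apply]; ring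
    rw [Finset.sum_congr rfl (fun k _ => this k), Finset.sum_sub_distrib, sum_eps_mul, sum_eps_mul]
    simp [eps, hij, (Ne.symm hij)]
    norm_num
  rw [h1, h2]
  funext k
  show v (Equiv.swap i j k) = _
  have hc : 2 * (v j - v i) / 2 = v j - v i := by ring
  simp only [Pi.sub_apply, Pi.smul_apply, smul_eq_mul, hc]
  by_cases hk : k = i
  · subst hk; rw [Equiv.swap_apply_left]; simp [eps, hij, Ne.symm hij]
  · by_cases hk2 : k = j
    · subst hk2; rw [Equiv.swap_apply_right]; simp [eps, hij, Ne.symm hij]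
    · rw [Equiv.swap_apply_of_ne_of_ne hk hk2]; simp [eps, hk, hk2]

lemma perm_mem (n : ℕ) (σ : Equiv.Perm (Fin n)) : permE n σ ∈ CWeyl n := by
  refine Equiv.Perm.swap_induction_on σ ?_ ?_
  · have : permE n 1 = 1 := by
      apply LinearEquiv.ext; intro v; rfl
    rw [this]; exact one_mem _
  · intro f x y hxy ih
    have : permE n (Equiv.swap x y * f) = permE n f * permE n (Equiv.swap x y) := by
      apply LinearEquiv.ext; intro v; rfl
    rw [this]; exact mul_mem ih (swap_mem n x y hxy)

lemma sq_one_of_pm {s : ℝ} (h : s = 1 ∨ s = -1) : s * s = 1 := by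
  rcases h with h | h <;> rw [h] <;> norm_num

lemma negE_F (n : ℕ) (F : Finset (Fin n)) : negE n (pmFun n F) (pmFun_sq n F) ∈ CWeyl n := by
  classical
  induction F using Finset.induction with
  | empty =>
    have : negE n (pmFun n ∅) (pmFun_sq n ∅) = 1 := by
      apply LinearEquiv.ext; intro v; funext j
      show pmFun n ∅ j * v j = v j
      simp [pmFun]
    rw [this]; exact one_mem _
  | @insert a F ha ih =>
    have : negE n (pmFun n (insert a F)) (pmFun_sq n (insert a F))
        = negE n (pmFun n {a}) (pmFun_sq n {a}) * negE n (pmFun n F) (pmFun_sq n F) := by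
      apply LinearEquiv.ext; intro v; funext j
      show pmFun n (insert a F) j * v j = pmFun n {a} j * (pmFun n F j * v j)
      unfold pmFun
      by_cases h1 : j = a
      · subst h1; simp [ha]
      · by_cases h2 : j ∈ F <;> simp [h1, h2]
    rw [this]; exact mul_mem (flip_mem n a) ih

lemma negE_mem (n : ℕ) (s : Fin n → ℝ) (hs : ∀ i, s i = 1 ∨ s i = -1) :
    negE n s (fun i => sq_one_of_pm (hs i)) ∈ CWeyl n := by
  classical
  obtain ⟨F, e⟩ : ∃ F, s = pmFun n F := by
    refine ⟨Finset.univ.filter (fun k => s k = -1), funext fun k => ?_⟩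
    rcases hs k with h | h <;> simp [pmFun, h] <;> norm_num
  subst e
  exact negE_F n F


def rr (m : ℕ) {n : ℕ} (i : Fin n) : ℤ := (2 * ((i:ℕ):ℤ) + 1) % (2 * m)

def kk (m : ℕ) {n : ℕ} (i : Fin n) : ℤ :=
  if rr m i = m then 0 else min (rr m i) (2 * m - rr m i)

def sgn (m : ℕ) {n : ℕ} (i : Fin n) : ℝ := if (m:ℤ) < rr m i then -1 else 1

section arith
variable {n m : ℕ} (hm : 1 ≤ m)

lemma h2m (hm : 1 ≤ m) : (0:ℤ) < 2 * m := by
  have : (1:ℤ) ≤ m := by exact_mod_cast hm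
  linarith

lemma rr_nonneg (hm : 1 ≤ m) (i : Fin n) : 0 ≤ rr m i :=
  Int.emod_nonneg _ (by have := h2m hm; omega)

lemma rr_lt (hm : 1 ≤ m) (i : Fin n) : rr m i < 2 * m :=
  Int.emod_lt_of_pos _ (h2m hm)

lemma rr_odd (hm : 1 ≤ m) (i : Fin n) : rr m i % 2 = 1 := by
  have h := Int.emod_emod_of_dvd (2 * ((i:ℕ):ℤ) + 1) (⟨(m:ℤ), rfl⟩ : (2:ℤ) ∣ 2 * m)
  unfold rr
  omega

lemma bounded_dvd {a b : ℤ} (hb : 0 < b) (h : b ∣ a) (h1 : 0 ≤ a) (h2 : a < 2 * b) :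
    a = 0 ∨ a = b := by
  obtain ⟨k, rfl⟩ := h
  have hk0 : 0 ≤ k := by nlinarith
  have hk2 : k < 2 := by nlinarith
  interval_cases k
  · left; ring
  · right; ring

lemma dvd_sub_iff (hm : 1 ≤ m) (i j : Fin n) :
    rr m j = rr m i ↔ (m:ℤ) ∣ (((j:ℕ):ℤ) - ((i:ℕ):ℤ)) := by
  unfold rr
  rw [Int.emod_eq_emod_iff_emod_sub_eq_zero]
  have e : (2 * ((j:ℕ):ℤ) + 1) - (2 * ((i:ℕ):ℤ) + 1) = 2 * (((j:ℕ):ℤ) - ((i:ℕ):ℤ)) := by ring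
  rw [e, ← Int.dvd_iff_emod_eq_zero]
  exact mul_dvd_mul_iff_left (by norm_num : (2:ℤ) ≠ 0)

lemma dvd_add_iff (hm : 1 ≤ m) (i j : Fin n) :
    rr m i + rr m j = 2 * (m:ℤ) ↔ (m:ℤ) ∣ (((i:ℕ):ℤ) + ((j:ℕ):ℤ) + 1) := by
  have hq1 : rr m i + (2 * (m:ℤ)) * ((2 * ((i:ℕ):ℤ) + 1) / (2 * m)) = 2 * ((i:ℕ):ℤ) + 1 :=
    Int.emod_add_mul_ediv _ _
  have hq2 : rr m j + (2 * (m:ℤ)) * ((2 * ((j:ℕ):ℤ) + 1) / (2 * m)) = 2 * ((j:ℕ):ℤ) + 1 :=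
    Int.emod_add_mul_ediv _ _
  set d1 := (2 * ((i:ℕ):ℤ) + 1) / (2 * m) with hd1
  set d2 := (2 * ((j:ℕ):ℤ) + 1) / (2 * m) with hd2
  constructor
  · intro h
    refine ⟨1 + d1 + d2, ?_⟩
    have h2 : 2 * (((i:ℕ):ℤ) + ((j:ℕ):ℤ) + 1) = 2 * ((m:ℤ) * (1 + d1 + d2)) := by
      linear_combination -hq1 - hq2 + h
    exact mul_left_cancel₀ (by norm_num : (2:ℤ) ≠ 0) h2
  · rintro ⟨k, hk⟩
    have hs : rr m i + rr m j = (2 * (m:ℤ)) * (k - d1 - d2) := by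
      linear_combination hq1 + hq2 + 2 * hk
    have := bounded_dvd (h2m hm) ⟨k - d1 - d2, hs⟩
      (by have := rr_nonneg hm i; have := rr_nonneg hm j; omega)
      (by have := rr_lt hm i; have := rr_lt hm j; omega)
    have o1 := rr_odd hm i
    have o2 := rr_odd hm j
    have p1 := rr_nonneg hm i
    have p2 := rr_nonneg hm j
    omega

lemma dvd_long_iff (hm : 1 ≤ m) (i : Fin n) :
    rr m i = m ↔ (m:ℤ) ∣ (2 * ((i:ℕ):ℤ) + 1) := by
  have hq1 : rr m i + (2 * (m:ℤ)) * ((2 * ((i:ℕ):ℤ) + 1) / (2 * m)) = 2 * ((i:ℕ):ℤ) + 1 :=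
    Int.emod_add_mul_ediv _ _
  set d1 := (2 * ((i:ℕ):ℤ) + 1) / (2 * m) with hd1
  constructor
  · intro h
    exact ⟨1 + 2 * d1, by linarith⟩
  · rintro ⟨k, hk⟩
    have hs : rr m i = (m:ℤ) * (k - 2 * d1) := by linear_combination hq1 + hk
    have hmpos : (0:ℤ) < m := by have := h2m hm; omega
    have := bounded_dvd hmpos ⟨k - 2 * d1, hs⟩ (rr_nonneg hm i) (rr_lt hm i)
    have o1 := rr_odd hm i
    omega

lemma kk_nonneg (hm : 1 ≤ m) (i : Fin n) : 0 ≤ kk m i := by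
  have := rr_nonneg hm i; have := rr_lt hm i
  unfold kk; split <;> omega

lemma kk_eq_zero_iff (hm : 1 ≤ m) (i : Fin n) : kk m i = 0 ↔ rr m i = m := by
  have := rr_nonneg hm i; have := rr_lt hm i; have := rr_odd hm i
  unfold kk; split <;> omega

lemma kk_eq_iff (hm : 1 ≤ m) (i j : Fin n) :
    kk m i = kk m j ↔ (rr m i = rr m j ∨ rr m i + rr m j = 2 * m) := by
  have := rr_nonneg hm i; have := rr_lt hm i; have := rr_odd hm i
  have := rr_nonneg hm j; have := rr_lt hm j; have := rr_odd hm j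
  unfold kk; split <;> split <;> omega

lemma sgn_pm (m : ℕ) (i : Fin n) : sgn m i = 1 ∨ sgn m i = -1 := by
  unfold sgn; split
  · right; rfl
  · left; rfl

lemma sgn_eq_of_rr_eq {i j : Fin n} (h : rr m i = rr m j) : sgn m i = sgn m j := by
  unfold sgn; rw [h]

lemma sgn_eq_one_of_m {i : Fin n} (h : rr m i = m) : sgn m i = 1 := by
  unfold sgn; rw [h]; simp

lemma sgn_neg_of {i j : Fin n} (hm : 1 ≤ m) (h : rr m i + rr m j = 2 * m)
    (hne : rr m i ≠ m) : sgn m i = -sgn m j := by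
  have := rr_nonneg hm i; have := rr_lt hm i
  have := rr_nonneg hm j; have := rr_lt hm j
  unfold sgn
  split_ifs with h1 h2 h2
  · exfalso; omega
  · norm_num
  · norm_num
  · exfalso; omega

end arith

section main
variable (n m : ℕ)

def tauP (n m : ℕ) : Equiv.Perm (Fin n) := Tuple.sort (kk m (n := n))

def gg (n m : ℕ) : Fin n → ℤ := fun p => kk m (tauP n m p)

lemma gg_mono : Monotone (gg n m) := Tuple.monotone_sort (kk m (n := n))

def SS (n m : ℕ) : Set (Fin n → ℝ) :=
  {v | ∃ p : Fin n, (p:ℕ) = 0 ∧ gg n m p = 0 ∧ v = (2:ℝ) • eps n p} ∪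
  {v | ∃ p q : Fin n, (q:ℕ) = (p:ℕ) + 1 ∧ gg n m p = gg n m q ∧ v = eps n q - eps n p}

lemma SS_sub : SS n m ⊆ CsimpleSet n := by
  rintro v (⟨p, hp0, _, hv⟩ | ⟨p, q, hq, _, hv⟩)
  · exact Or.inl ⟨p, hp0, hv⟩
  · exact Or.inr ⟨p, q, hq, hv⟩

lemma gg_fiber (hm : 1 ≤ m) {p u q : Fin n} (hpu : p ≤ u) (huq : u ≤ q)
    (h : gg n m p = gg n m q) : gg n m u = gg n m p :=
  le_antisymm (h ▸ gg_mono n m huq) (gg_mono n m hpu)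

lemma span_diff_aux (hm : 1 ≤ m) :
    ∀ (d : ℕ) (p q : Fin n), (q:ℕ) = (p:ℕ) + d → gg n m p = gg n m q →
      eps n q - eps n p ∈ Submodule.span ℝ (SS n m) := by
  intro d
  induction d with
  | zero =>
    intro p q hq _
    have : q = p := Fin.ext (by omega)
    subst this
    simp
  | succ d ih =>
    intro p q hq hg
    have hu : (p:ℕ) + d < n := by have := q.isLt; omega
    set u : Fin n := ⟨(p:ℕ) + d, hu⟩ with hudef
    have hpu : p ≤ u := by simp [Fin.le_def, hudef]
    have huq : u ≤ q := by simp [Fin.le_def, hudef]; omega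
    have hgu : gg n m u = gg n m p := gg_fiber n m hm hpu huq hg
    have h1 : eps n q - eps n u ∈ Submodule.span ℝ (SS n m) := by
      apply Submodule.subset_span
      exact Or.inr ⟨u, q, by simp only [hudef]; omega, by rw [hgu, hg], rfl⟩
    have h2 : eps n u - eps n p ∈ Submodule.span ℝ (SS n m) := ih p u rfl hgu.symm
    have : eps n q - eps n p = (eps n q - eps n u) + (eps n u - eps n p) := by abel
    rw [this]
    exact Submodule.add_mem _ h1 h2

lemma span_diff (hm : 1 ≤ m) {p q : Fin n} (hg : gg n m p = gg n m q) :
    eps n q - eps n p ∈ Submodule.span ℝ (SS n m) := by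
  rcases le_total p q with h | h
  · exact span_diff_aux n m hm ((q:ℕ) - (p:ℕ)) p q (by omega) hg
  · have := span_diff_aux n m hm ((p:ℕ) - (q:ℕ)) q p (by omega) hg.symm
    have e : eps n q - eps n p = -(eps n p - eps n q) := by abel
    rw [e]
    exact Submodule.neg_mem _ this

lemma gg_zero_head (hm : 1 ≤ m) (hn : 1 ≤ n) {p : Fin n} (hp : gg n m p = 0) :
    gg n m (⟨0, by omega⟩ : Fin n) = 0 := by
  have h1 : (⟨0, by omega⟩ : Fin n) ≤ p := by simp [Fin.le_def]
  have h2 := gg_mono n m h1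
  have h3 : 0 ≤ gg n m (⟨0, by omega⟩ : Fin n) := kk_nonneg hm _
  omega

lemma span_single (hm : 1 ≤ m) (hn : 1 ≤ n) {p : Fin n} (hp : gg n m p = 0) :
    eps n p ∈ Submodule.span ℝ (SS n m) := by
  set z : Fin n := ⟨0, by omega⟩ with hz
  have hgz : gg n m z = 0 := gg_zero_head n m hm hn hp
  have h1 : eps n p - eps n z ∈ Submodule.span ℝ (SS n m) := span_diff n m hm (by rw [hgz, hp])
  have h2 : (2:ℝ) • eps n z ∈ Submodule.span ℝ (SS n m) :=
    Submodule.subset_span (Or.inl ⟨z, rfl, hgz, rfl⟩)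
  have e : eps n p = (eps n p - eps n z) + (1/2 : ℝ) • ((2:ℝ) • eps n z) := by
    rw [smul_smul]; norm_num
  rw [e]
  exact Submodule.add_mem _ h1 (Submodule.smul_mem _ _ h2)

def LF (n m : ℕ) (t : ℤ) : (Fin n → ℝ) →ₗ[ℝ] ℝ where
  toFun v := ∑ p ∈ Finset.univ.filter (fun p => gg n m p = t), v p
  map_add' u v := by simp [Finset.sum_add_distrib]
  map_smul' c v := by simp [Finset.mul_sum]

lemma LF_eps (t : ℤ) (p : Fin n) :
    LF n m t (eps n p) = if gg n m p = t then 1 else 0 := by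
  show (∑ u ∈ Finset.univ.filter (fun u => gg n m u = t), eps n p u) = _
  have : ∀ u, eps n p u = if u = p then (1:ℝ) else 0 := fun u => rfl
  rw [Finset.sum_congr rfl (fun u _ => this u), Finset.sum_ite_eq']
  simp

lemma LF_span_zero {t : ℤ} (ht : t ≠ 0) {v : Fin n → ℝ}
    (hv : v ∈ Submodule.span ℝ (SS n m)) : LF n m t v = 0 := by
  have hle : Submodule.span ℝ (SS n m) ≤ LinearMap.ker (LF n m t) := by
    rw [Submodule.span_le]
    rintro v (⟨p, hp0, hg, rfl⟩ | ⟨p, q, hq, hg, rfl⟩)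
    · rw [SetLike.mem_coe, LinearMap.mem_ker, map_smul, LF_eps]
      rw [if_neg (by rw [hg]; exact fun h => ht h.symm)]
      simp
    · rw [SetLike.mem_coe, LinearMap.mem_ker, map_sub, LF_eps, LF_eps, hg, sub_self]
  exact LinearMap.mem_ker.mp (hle hv)

lemma constr_diff {p q : Fin n} (hpq : p ≠ q)
    (h : eps n q - eps n p ∈ Submodule.span ℝ (SS n m)) : gg n m p = gg n m q := by
  by_contra hne
  by_cases hgq : gg n m q = 0
  · have hgp : gg n m p ≠ 0 := fun h0 => hne (by rw [h0, hgq])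
    have := LF_span_zero n m hgp h
    rw [map_sub, LF_eps, LF_eps, if_neg (fun h => hne h.symm), if_pos rfl] at this
    norm_num at this
  · have := LF_span_zero n m hgq h
    rw [map_sub, LF_eps, LF_eps, if_pos rfl, if_neg hne] at this
    norm_num at this

lemma constr_sum {p q : Fin n} (h : eps n q + eps n p ∈ Submodule.span ℝ (SS n m)) :
    gg n m p = 0 ∧ gg n m q = 0 := by
  constructor
  · by_contra hgp
    have := LF_span_zero n m hgp h
    rw [map_add, LF_eps, LF_eps, if_pos rfl] at this
    split_ifs at this <;> norm_num at this
  · by_contra hgq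
    have := LF_span_zero n m hgq h
    rw [map_add, LF_eps, LF_eps, if_pos rfl] at this
    split_ifs at this <;> norm_num at this

lemma constr_long {p : Fin n} (h : (2:ℝ) • eps n p ∈ Submodule.span ℝ (SS n m)) :
    gg n m p = 0 := by
  by_contra hgp
  have := LF_span_zero n m hgp h
  rw [map_smul, LF_eps, if_pos rfl] at this
  norm_num at this

def ww (n m : ℕ) : (Fin n → ℝ) ≃ₗ[ℝ] (Fin n → ℝ) :=
  negE n (fun j => sgn m (tauP n m j))
    (fun j => sq_one_of_pm (sgn_pm m (tauP n m j))) * permE n (tauP n m)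

lemma ww_mem : ww n m ∈ CWeyl n :=
  mul_mem (negE_mem n _ (fun j => sgn_pm m (tauP n m j))) (perm_mem n (tauP n m))

lemma ww_apply (v : Fin n → ℝ) (j : Fin n) :
    ww n m v j = sgn m (tauP n m j) * v (tauP n m j) := rfl

lemma ww_eps (i : Fin n) :
    ww n m (eps n i) = sgn m i • eps n ((tauP n m)⁻¹ i) := by
  funext j
  rw [ww_apply]
  by_cases h : j = (tauP n m)⁻¹ i
  · subst h
    simp [eps, Equiv.apply_symm_apply]
  · have h2 : tauP n m j ≠ i := by
      intro he
      apply h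
      rw [← he]
      exact (Equiv.symm_apply_apply _ _).symm
    simp [eps, h2, h]; intro hj; exact absurd hj h

lemma htC_eps (i : Fin n) : htC n (eps n i) = (i:ℝ) + 1/2 := by
  unfold htC
  have : ∀ k : Fin n, eps n i k * ((k:ℝ) + 1/2)
      = if k = i then ((k:ℝ) + 1/2) else 0 := by
    intro k; unfold eps; split <;> ring
  rw [Finset.sum_congr rfl (fun k _ => this k), Finset.sum_ite_eq']
  simp

lemma htC_sub (u v : Fin n → ℝ) : htC n (u - v) = htC n u - htC n v := by
  unfold htC
  rw [← Finset.sum_sub_distrib]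
  exact Finset.sum_congr rfl (fun k _ => by simp [sub_mul])

lemma htC_add (u v : Fin n → ℝ) : htC n (u + v) = htC n u + htC n v := by
  unfold htC
  rw [← Finset.sum_add_distrib]
  exact Finset.sum_congr rfl (fun k _ => by simp [add_mul])

lemma htC_smul (c : ℝ) (v : Fin n → ℝ) : htC n (c • v) = c * htC n v := by
  unfold htC
  rw [Finset.mul_sum]
  exact Finset.sum_congr rfl (fun k _ => by simp [mul_assoc])

lemma htC_neg (v : Fin n → ℝ) : htC n (-v) = -htC n v := by
  have : -v = (-1 : ℝ) • v := by funext k; simp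
  rw [this, htC_smul]; ring

lemma div_real_iff (m : ℕ) (a : ℤ) :
    (∃ l : ℤ, ((a : ℤ) : ℝ) = (m:ℝ) * l) ↔ (m:ℤ) ∣ a := by
  constructor
  · rintro ⟨l, hl⟩
    exact ⟨l, by exact_mod_cast hl⟩
  · rintro ⟨l, hl⟩
    exact ⟨l, by rw [hl]; push_cast; ring⟩

lemma croots_neg {v : Fin n → ℝ} (h : v ∈ Croots n) : -v ∈ Croots n := by
  rcases h with ⟨i, j, hij, h4⟩ | ⟨i, h2⟩
  · rcases h4 with h | h | h | h
    · exact Or.inl ⟨i, j, hij, Or.inr (Or.inl (by rw [h]))⟩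
    · exact Or.inl ⟨i, j, hij, Or.inl (by rw [h, neg_neg])⟩
    · exact Or.inl ⟨i, j, hij, Or.inr (Or.inr (Or.inr (by rw [h])))⟩
    · exact Or.inl ⟨i, j, hij, Or.inr (Or.inr (Or.inl (by rw [h, neg_neg])))⟩
  · rcases h2 with h | h
    · exact Or.inr ⟨i, Or.inr (by rw [h])⟩
    · exact Or.inr ⟨i, Or.inl (by rw [h, neg_neg])⟩

lemma croots_diff {i j : Fin n} (hij : i ≠ j) : eps n j - eps n i ∈ Croots n := by
  rcases lt_or_gt_of_ne hij with h | h
  · exact Or.inl ⟨i, j, h, Or.inl rfl⟩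
  · exact Or.inl ⟨j, i, h, Or.inr (Or.inl (by abel))⟩

lemma croots_sum {i j : Fin n} (hij : i ≠ j) : eps n j + eps n i ∈ Croots n := by
  rcases lt_or_gt_of_ne hij with h | h
  · exact Or.inl ⟨i, j, h, Or.inr (Or.inr (Or.inl rfl))⟩
  · exact Or.inl ⟨j, i, h, Or.inr (Or.inr (Or.inl (by abel)))⟩

lemma croots_smul_pm {c : ℝ} (hc : c = 1 ∨ c = -1) {v : Fin n → ℝ}
    (h : v ∈ Croots n) : c • v ∈ Croots n := by
  rcases hc with hc | hc
  · rw [hc, one_smul]; exact h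
  · rw [hc, neg_one_smul]; exact croots_neg n h

lemma croots_pm {p q : Fin n} (hpq : p ≠ q) {a b : ℝ}
    (ha : a = 1 ∨ a = -1) (hb : b = 1 ∨ b = -1) :
    a • eps n q + b • eps n p ∈ Croots n := by
  rcases ha with ha | ha <;> rcases hb with hb | hb <;> subst ha <;> subst hb
  · have := croots_sum n hpq
    rwa [one_smul, one_smul]
  · have := croots_diff n hpq
    have e : (1:ℝ) • eps n q + (-1:ℝ) • eps n p = eps n q - eps n p := by module
    rwa [e]
  · have := croots_neg n (croots_diff n hpq)
    have e : (-1:ℝ) • eps n q + (1:ℝ) • eps n p = -(eps n q - eps n p) := by module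
    rwa [e]
  · have := croots_neg n (croots_sum n hpq)
    have e : (-1:ℝ) • eps n q + (-1:ℝ) • eps n p = -(eps n q + eps n p) := by module
    rwa [e]

lemma gg_inv (i : Fin n) : gg n m ((tauP n m)⁻¹ i) = kk m i := by
  show kk m (tauP n m ((tauP n m)⁻¹ i)) = kk m i
  rw [Equiv.Perm.inv_def, Equiv.apply_symm_apply]

lemma pm_neg {c : ℝ} (hc : c = 1 ∨ c = -1) : -c = 1 ∨ -c = -1 := by
  rcases hc with hc | hc <;> rw [hc] <;> norm_num

lemma div_smul_pm (hm : 1 ≤ m) {c : ℝ} (hc : c = 1 ∨ c = -1) {x : Fin n → ℝ}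
    (h : ∃ l : ℤ, htC n x = (m:ℝ) * l) : ∃ l : ℤ, htC n (c • x) = (m:ℝ) * l := by
  obtain ⟨l, hl⟩ := h
  rcases hc with hc | hc
  · exact ⟨l, by rw [hc, one_smul]; exact hl⟩
  · exact ⟨-l, by rw [hc, htC_smul, hl]; push_cast; ring⟩

lemma div_diff (hm : 1 ≤ m) {i j : Fin n} (hr : rr m j = rr m i) :
    ∃ l : ℤ, htC n (eps n j - eps n i) = (m:ℝ) * l := by
  obtain ⟨l, hl⟩ := (div_real_iff m _).mpr ((dvd_sub_iff hm i j).mp hr)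
  refine ⟨l, ?_⟩
  rw [htC_sub, htC_eps, htC_eps]
  push_cast at hl ⊢
  linarith

lemma div_sum (hm : 1 ≤ m) {i j : Fin n} (hr : rr m i + rr m j = 2 * m) :
    ∃ l : ℤ, htC n (eps n j + eps n i) = (m:ℝ) * l := by
  obtain ⟨l, hl⟩ := (div_real_iff m _).mpr ((dvd_add_iff hm i j).mp hr)
  refine ⟨l, ?_⟩
  rw [htC_add, htC_eps, htC_eps]
  push_cast at hl ⊢
  linarith

lemma div_long (hm : 1 ≤ m) {i : Fin n} (hr : rr m i = m) :
    ∃ l : ℤ, htC n ((2:ℝ) • eps n i) = (m:ℝ) * l := by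
  obtain ⟨l, hl⟩ := (div_real_iff m _).mpr ((dvd_long_iff hm i).mp hr)
  refine ⟨l, ?_⟩
  rw [htC_smul, htC_eps]
  push_cast at hl ⊢
  linarith

lemma fwd_diff (hm : 1 ≤ m) {i j : Fin n} (hij : i ≠ j) (hr : rr m j = rr m i) :
    ww n m (eps n j - eps n i) ∈ Croots n ∧
      ww n m (eps n j - eps n i) ∈ Submodule.span ℝ (SS n m) := by
  set p := (tauP n m)⁻¹ i with hp
  set q := (tauP n m)⁻¹ j with hq
  have hpq : p ≠ q := fun h => hij (Equiv.injective _ h)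
  have hw : ww n m (eps n j - eps n i) = sgn m j • eps n q - sgn m i • eps n p := by
    rw [map_sub, ww_eps, ww_eps]
  have hs : sgn m i = sgn m j := sgn_eq_of_rr_eq hr.symm
  have hgg : gg n m p = gg n m q := by
    rw [hp, hq, gg_inv, gg_inv]
    exact (kk_eq_iff hm i j).mpr (Or.inl hr.symm)
  constructor
  · have e : sgn m j • eps n q - sgn m i • eps n p
        = sgn m j • eps n q + (-sgn m i) • eps n p := by module
    rw [hw, e]
    exact croots_pm n hpq (sgn_pm m j) (pm_neg (sgn_pm m i))
  · have e2 : sgn m j • eps n q - sgn m i • eps n p = sgn m i • (eps n q - eps n p) := by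
      rw [hs]; module
    rw [hw, e2]
    exact Submodule.smul_mem _ _ (span_diff n m hm hgg)

lemma fwd_sum (hn : 1 ≤ n) (hm : 1 ≤ m) {i j : Fin n} (hij : i ≠ j)
    (hr : rr m i + rr m j = 2 * m) :
    ww n m (eps n j + eps n i) ∈ Croots n ∧
      ww n m (eps n j + eps n i) ∈ Submodule.span ℝ (SS n m) := by
  set p := (tauP n m)⁻¹ i with hp
  set q := (tauP n m)⁻¹ j with hq
  have hpq : p ≠ q := fun h => hij (Equiv.injective _ h)
  have hw : ww n m (eps n j + eps n i) = sgn m j • eps n q + sgn m i • eps n p := by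
    rw [map_add, ww_eps, ww_eps]
  by_cases hmi : rr m i = m
  · have hmj : rr m j = m := by omega
    have h1 : sgn m i = 1 := sgn_eq_one_of_m hmi
    have h2 : sgn m j = 1 := sgn_eq_one_of_m hmj
    have hgp : gg n m p = 0 := by rw [hp, gg_inv]; exact (kk_eq_zero_iff hm i).mpr hmi
    have hgq : gg n m q = 0 := by rw [hq, gg_inv]; exact (kk_eq_zero_iff hm j).mpr hmj
    rw [hw, h1, h2, one_smul, one_smul]
    exact ⟨croots_sum n hpq, Submodule.add_mem _ (span_single n m hm hn hgq)
      (span_single n m hm hn hgp)⟩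
  · have hneg : sgn m i = -sgn m j := sgn_neg_of hm hr hmi
    have hgg : gg n m p = gg n m q := by
      rw [hp, hq, gg_inv, gg_inv]
      exact (kk_eq_iff hm i j).mpr (Or.inr hr)
    constructor
    · rw [hw]
      exact croots_pm n hpq (sgn_pm m j) (sgn_pm m i)
    · have e : sgn m j • eps n q + sgn m i • eps n p = sgn m j • (eps n q - eps n p) := by
        rw [hneg]; module
      rw [hw, e]
      exact Submodule.smul_mem _ _ (span_diff n m hm hgg)

lemma fwd_long (hn : 1 ≤ n) (hm : 1 ≤ m) {i : Fin n} (hr : rr m i = m) :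
    ww n m ((2:ℝ) • eps n i) ∈ Croots n ∧
      ww n m ((2:ℝ) • eps n i) ∈ Submodule.span ℝ (SS n m) := by
  set p := (tauP n m)⁻¹ i with hp
  have h1 : sgn m i = 1 := sgn_eq_one_of_m hr
  have hgp : gg n m p = 0 := by rw [hp, gg_inv]; exact (kk_eq_zero_iff hm i).mpr hr
  have hw : ww n m ((2:ℝ) • eps n i) = (2:ℝ) • eps n p := by
    rw [map_smul, ww_eps, h1, one_smul]
  rw [hw]
  exact ⟨Or.inr ⟨p, Or.inl rfl⟩, Submodule.smul_mem _ _ (span_single n m hm hn hgp)⟩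

lemma fwd (hn : 1 ≤ n) (hm : 1 ≤ m) {ρ : Fin n → ℝ} (hC : ρ ∈ Croots n)
    (hdiv : ∃ l : ℤ, htC n ρ = (m:ℝ) * l) :
    ww n m ρ ∈ Croots n ∧ ww n m ρ ∈ Submodule.span ℝ (SS n m) := by
  rcases hC with ⟨i, j, hij, h4⟩ | ⟨i, h2⟩
  · have hijne : i ≠ j := ne_of_lt hij
    rcases h4 with h | h | h | h
    · subst h
      obtain ⟨l, hl⟩ := hdiv
      rw [htC_sub, htC_eps, htC_eps] at hl
      have hd : (m:ℤ) ∣ (((j:ℕ):ℤ) - ((i:ℕ):ℤ)) :=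
        (div_real_iff m _).mp ⟨l, by push_cast at hl ⊢; linarith⟩
      exact fwd_diff n m hm hijne ((dvd_sub_iff hm i j).mpr hd)
    · subst h
      obtain ⟨l, hl⟩ := hdiv
      rw [htC_neg, htC_sub, htC_eps, htC_eps] at hl
      have hd : (m:ℤ) ∣ (((j:ℕ):ℤ) - ((i:ℕ):ℤ)) := by
        have : (m:ℤ) ∣ (-(((j:ℕ):ℤ) - ((i:ℕ):ℤ))) :=
          (div_real_iff m _).mp ⟨l, by push_cast at hl ⊢; linarith⟩
        exact dvd_neg.mp this
      have := fwd_diff n m hm hijne ((dvd_sub_iff hm i j).mpr hd)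
      rw [map_neg]
      exact ⟨croots_neg n this.1, Submodule.neg_mem _ this.2⟩
    · subst h
      obtain ⟨l, hl⟩ := hdiv
      rw [htC_add, htC_eps, htC_eps] at hl
      have hd : (m:ℤ) ∣ (((i:ℕ):ℤ) + ((j:ℕ):ℤ) + 1) :=
        (div_real_iff m _).mp ⟨l, by push_cast at hl ⊢; linarith⟩
      exact fwd_sum n m hn hm hijne ((dvd_add_iff hm i j).mpr hd)
    · subst h
      obtain ⟨l, hl⟩ := hdiv
      rw [htC_neg, htC_add, htC_eps, htC_eps] at hl
      have hd : (m:ℤ) ∣ (((i:ℕ):ℤ) + ((j:ℕ):ℤ) + 1) := by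
        have : (m:ℤ) ∣ (-(((i:ℕ):ℤ) + ((j:ℕ):ℤ) + 1)) :=
          (div_real_iff m _).mp ⟨l, by push_cast at hl ⊢; linarith⟩
        exact dvd_neg.mp this
      have := fwd_sum n m hn hm hijne ((dvd_add_iff hm i j).mpr hd)
      rw [map_neg]
      exact ⟨croots_neg n this.1, Submodule.neg_mem _ this.2⟩
  · rcases h2 with h | h
    · subst h
      obtain ⟨l, hl⟩ := hdiv
      rw [htC_smul, htC_eps] at hl
      have hd : (m:ℤ) ∣ (2 * ((i:ℕ):ℤ) + 1) :=
        (div_real_iff m _).mp ⟨l, by push_cast at hl ⊢; linarith⟩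
      exact fwd_long n m hn hm ((dvd_long_iff hm i).mpr hd)
    · subst h
      obtain ⟨l, hl⟩ := hdiv
      rw [htC_neg, htC_smul, htC_eps] at hl
      have hd : (m:ℤ) ∣ (2 * ((i:ℕ):ℤ) + 1) := by
        have : (m:ℤ) ∣ (-(2 * ((i:ℕ):ℤ) + 1)) :=
          (div_real_iff m _).mp ⟨l, by push_cast at hl ⊢; linarith⟩
        exact dvd_neg.mp this
      have := fwd_long n m hn hm ((dvd_long_iff hm i).mpr hd)
      rw [map_neg]
      exact ⟨croots_neg n this.1, Submodule.neg_mem _ this.2⟩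

lemma bwd_diff (hm : 1 ≤ m) {p q : Fin n} (hpq : p ≠ q) (hg : gg n m p = gg n m q) :
    ∃ ρ, (ρ ∈ Croots n ∧ ∃ l : ℤ, htC n ρ = (m:ℝ) * l) ∧
      ww n m ρ = eps n q - eps n p := by
  set i := tauP n m p with hi
  set j := tauP n m q with hj
  have hij : i ≠ j := fun h => hpq (Equiv.injective _ h)
  have hk : kk m i = kk m j := hg
  have hip : (tauP n m)⁻¹ i = p := by rw [hi, Equiv.Perm.inv_def, Equiv.symm_apply_apply]
  have hjq : (tauP n m)⁻¹ j = q := by rw [hj, Equiv.Perm.inv_def, Equiv.symm_apply_apply]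
  by_cases hre : rr m i = rr m j
  · refine ⟨sgn m i • (eps n j - eps n i),
      ⟨croots_smul_pm n (sgn_pm m i) (croots_diff n hij),
       div_smul_pm n m hm (sgn_pm m i) (div_diff n m hm hre.symm)⟩, ?_⟩
    have hs : sgn m j = sgn m i := sgn_eq_of_rr_eq hre.symm
    rw [map_smul, map_sub, ww_eps, ww_eps, hip, hjq, hs, smul_sub, smul_smul, smul_smul,
      sq_one_of_pm (sgn_pm m i), one_smul, one_smul]
  · have hr : rr m i + rr m j = 2 * m := by
      rcases (kk_eq_iff hm i j).mp hk with h | h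
      · exact absurd h hre
      · exact h
    have hmi : rr m i ≠ m := by
      intro h
      exact hre (by omega)
    have hneg : sgn m i = -sgn m j := sgn_neg_of hm hr hmi
    refine ⟨sgn m j • (eps n j + eps n i),
      ⟨croots_smul_pm n (sgn_pm m j) (croots_sum n hij),
       div_smul_pm n m hm (sgn_pm m j) (div_sum n m hm hr)⟩, ?_⟩
    have h2 := sq_one_of_pm (sgn_pm m j)
    have h3 : sgn m j * sgn m i = -1 := by rw [hneg, mul_neg, h2]
    rw [map_smul, map_add, ww_eps, ww_eps, hip, hjq, smul_add, smul_smul, smul_smul,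
      h2, h3, one_smul, neg_one_smul, ← sub_eq_add_neg]

lemma bwd_sum (hm : 1 ≤ m) {p q : Fin n} (hpq : p ≠ q) (hgp : gg n m p = 0)
    (hgq : gg n m q = 0) :
    ∃ ρ, (ρ ∈ Croots n ∧ ∃ l : ℤ, htC n ρ = (m:ℝ) * l) ∧
      ww n m ρ = eps n q + eps n p := by
  set i := tauP n m p with hi
  set j := tauP n m q with hj
  have hij : i ≠ j := fun h => hpq (Equiv.injective _ h)
  have hip : (tauP n m)⁻¹ i = p := by rw [hi, Equiv.Perm.inv_def, Equiv.symm_apply_apply]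
  have hjq : (tauP n m)⁻¹ j = q := by rw [hj, Equiv.Perm.inv_def, Equiv.symm_apply_apply]
  have hri : rr m i = m := (kk_eq_zero_iff hm i).mp hgp
  have hrj : rr m j = m := (kk_eq_zero_iff hm j).mp hgq
  have hr : rr m i + rr m j = 2 * m := by omega
  refine ⟨eps n j + eps n i, ⟨croots_sum n hij, div_sum n m hm hr⟩, ?_⟩
  rw [map_add, ww_eps, ww_eps, hip, hjq, sgn_eq_one_of_m hri, sgn_eq_one_of_m hrj,
    one_smul, one_smul]

lemma bwd_long (hm : 1 ≤ m) {p : Fin n} (hgp : gg n m p = 0) :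
    ∃ ρ, (ρ ∈ Croots n ∧ ∃ l : ℤ, htC n ρ = (m:ℝ) * l) ∧
      ww n m ρ = (2:ℝ) • eps n p := by
  set i := tauP n m p with hi
  have hip : (tauP n m)⁻¹ i = p := by rw [hi, Equiv.Perm.inv_def, Equiv.symm_apply_apply]
  have hri : rr m i = m := (kk_eq_zero_iff hm i).mp hgp
  refine ⟨(2:ℝ) • eps n i, ⟨Or.inr ⟨i, Or.inl rfl⟩, div_long n m hm hri⟩, ?_⟩
  rw [map_smul, ww_eps, hip, sgn_eq_one_of_m hri, one_smul]

lemma bwd (hm : 1 ≤ m) {u : Fin n → ℝ} (hC : u ∈ Croots n)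
    (hS : u ∈ Submodule.span ℝ (SS n m)) :
    ∃ ρ, (ρ ∈ Croots n ∧ ∃ l : ℤ, htC n ρ = (m:ℝ) * l) ∧ ww n m ρ = u := by
  rcases hC with ⟨p, q, hpq, h4⟩ | ⟨p, h2⟩
  · have hpqne : p ≠ q := ne_of_lt hpq
    rcases h4 with h | h | h | h
    · subst h
      exact bwd_diff n m hm hpqne (constr_diff n m hpqne hS)
    · have hS' : eps n q - eps n p ∈ Submodule.span ℝ (SS n m) := by
        have := Submodule.neg_mem _ hS
        rwa [h, neg_neg] at this
      obtain ⟨ρ, ⟨h1, l, h2⟩, h3⟩ := bwd_diff n m hm hpqne (constr_diff n m hpqne hS')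
      refine ⟨-ρ, ⟨croots_neg n h1, ⟨-l, by rw [htC_neg, h2]; push_cast; ring⟩⟩, ?_⟩
      rw [map_neg, h3, ← h]
    · subst h
      obtain ⟨hgp, hgq⟩ := constr_sum n m hS
      exact bwd_sum n m hm hpqne hgp hgq
    · have hS' : eps n q + eps n p ∈ Submodule.span ℝ (SS n m) := by
        have := Submodule.neg_mem _ hS
        rwa [h, neg_neg] at this
      obtain ⟨hgp, hgq⟩ := constr_sum n m hS'
      obtain ⟨ρ, ⟨h1, l, h2⟩, h3⟩ := bwd_sum n m hm hpqne hgp hgq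
      refine ⟨-ρ, ⟨croots_neg n h1, ⟨-l, by rw [htC_neg, h2]; push_cast; ring⟩⟩, ?_⟩
      rw [map_neg, h3, ← h]
  · rcases h2 with h | h
    · subst h
      exact bwd_long n m hm (constr_long n m hS)
    · have hS' : (2:ℝ) • eps n p ∈ Submodule.span ℝ (SS n m) := by
        have := Submodule.neg_mem _ hS
        rwa [h, neg_neg] at this
      obtain ⟨ρ, ⟨h1, l, h2⟩, h3⟩ := bwd_long n m hm (constr_long n m hS')
      refine ⟨-ρ, ⟨croots_neg n h1, ⟨-l, by rw [htC_neg, h2]; push_cast; ring⟩⟩, ?_⟩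
      rw [map_neg, h3, ← h]


/-- for `m ≥ 2`, the set `R(m)` of all roots of `Cₙ` whose height is
divisible by `m` is of Levi type: some element `w` of the Weyl group maps `R(m)`
bijectively onto `R ∩ span_ℝ(S)` for some subset `S` of the simple roots. -/
theorem stmt4 (n : ℕ) (hn : 2 ≤ n) (m : ℕ) (hm : 2 ≤ m) :
    ∃ w ∈ CWeyl n, ∃ S ⊆ CsimpleSet n,
      (w : (Fin n → ℝ) → (Fin n → ℝ)) '' {v ∈ Croots n | ∃ l : ℤ, htC n v = (m : ℝ) * l} =
        Croots n ∩ (Submodule.span ℝ S : Submodule ℝ (Fin n → ℝ)) := by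
  have hm1 : 1 ≤ m := by omega
  have hn1 : 1 ≤ n := by omega
  refine ⟨ww n m, ww_mem n m, SS n m, SS_sub n m, ?_⟩
  ext u
  constructor
  · rintro ⟨ρ, ⟨hC, hdiv⟩, rfl⟩
    obtain ⟨h1, h2⟩ := fwd n m hn1 hm1 hC hdiv
    exact ⟨h1, h2⟩
  · rintro ⟨hC, hS⟩
    obtain ⟨ρ, hρ, hw⟩ := bwd n m hm1 hC hS
    exact ⟨ρ, hρ, hw⟩
end main
end
end

section
/- Let n ≥ 3, let k ≥ 1 be an integer with 3k ≤ n, and set m = 2k. Then ε_k + ε_{3k} is a root of B_n of height 2m which is not the sum of two roots of height m, and every positive root of B_n whose height is divisible by m can be written as a sum of elements of R_m ∪ {ε_k + ε_{3k}}. -/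
noncomputable section

/-- The root system of type `Bₙ`. -/
def Broots (n : ℕ) : Set (Fin n → ℝ) :=
  {v | (∃ i : Fin n, v = eps n i ∨ v = -eps n i) ∨
       (∃ i j : Fin n, i < j ∧
         (v = eps n j - eps n i ∨ v = -(eps n j - eps n i) ∨
          v = eps n j + eps n i ∨ v = -(eps n j + eps n i)))}

/-- The height functional for type `Bₙ`. -/
def htB (n : ℕ) (v : Fin n → ℝ) : ℝ := ∑ i : Fin n, v i * ((i : ℝ) + 1)

lemma htB_add (n : ℕ) (a b : Fin n → ℝ) : htB n (a + b) = htB n a + htB n b := by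
  simp [htB, add_mul, Finset.sum_add_distrib]

lemma htB_neg (n : ℕ) (a : Fin n → ℝ) : htB n (-a) = - htB n a := by
  simp [htB, Finset.sum_neg_distrib]

lemma htB_sub (n : ℕ) (a b : Fin n → ℝ) : htB n (a - b) = htB n a - htB n b := by
  simp [htB, sub_mul, Finset.sum_sub_distrib]

lemma htB_eps (n : ℕ) (i : Fin n) : htB n (eps n i) = (i : ℝ) + 1 := by
  simp [htB, eps]

/-- classification of positive roots -/
lemma classify (n : ℕ) (v : Fin n → ℝ) (hv : v ∈ Broots n) (hpos : 0 < htB n v) :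
    (∃ i : Fin n, v = eps n i) ∨
    (∃ i j : Fin n, i < j ∧ v = eps n j - eps n i) ∨
    (∃ i j : Fin n, i < j ∧ v = eps n j + eps n i) := by
  rcases hv with ⟨i, h | h⟩ | ⟨i, j, hij, h | h | h | h⟩
  · exact Or.inl ⟨i, h⟩
  · exfalso
    rw [h, htB_neg, htB_eps] at hpos
    have : (0:ℝ) ≤ (i:ℝ) := by positivity
    linarith
  · exact Or.inr (Or.inl ⟨i, j, hij, h⟩)
  · exfalso
    rw [h, htB_neg, htB_sub, htB_eps, htB_eps] at hpos
    have : (i:ℝ) < (j:ℝ) := by exact_mod_cast hij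
    linarith
  · exact Or.inr (Or.inr ⟨i, j, hij, h⟩)
  · exfalso
    rw [h, htB_neg, htB_add, htB_eps, htB_eps] at hpos
    have h1 : (0:ℝ) ≤ (i:ℝ) := by positivity
    have h2 : (0:ℝ) ≤ (j:ℝ) := by positivity
    linarith

lemma pairing_nonpos (n k : ℕ) (hk : 1 ≤ k) (h3k : 3 * k ≤ n)
    (r : Fin n → ℝ) (hr : r ∈ Broots n) (hht : htB n r = 2 * (k : ℝ)) :
    r ⟨k - 1, by omega⟩ + r ⟨3 * k - 1, Nat.lt_of_lt_of_le (by omega) h3k⟩ ≤ 0 := by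
  have hkR : (1:ℝ) ≤ (k:ℝ) := by exact_mod_cast hk
  have hpos : 0 < htB n r := by rw [hht]; linarith
  rcases classify n r hr hpos with ⟨i, hi⟩ | ⟨i, j, hij, hij'⟩ | ⟨i, j, hij, hij'⟩
  · rw [hi, htB_eps] at hht
    have h1 : (i:ℕ) + 1 = 2 * k := by exact_mod_cast hht
    rw [hi]
    simp only [eps, Fin.mk.injEq, Fin.ext_iff]
    split_ifs <;> (try norm_num) <;> omega
  · rw [hij', htB_sub, htB_eps, htB_eps] at hht
    have h1 : (i:ℕ) + 2 * k = (j:ℕ) := by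
      have : (i:ℝ) + 2*(k:ℝ) = (j:ℝ) := by linarith
      exact_mod_cast this
    have hij2 : (i:ℕ) < (j:ℕ) := hij
    rw [hij']
    simp only [eps, Pi.sub_apply, Fin.ext_iff]
    split_ifs <;> (try norm_num) <;> omega
  · rw [hij', htB_add, htB_eps, htB_eps] at hht
    have h1 : (i:ℕ) + (j:ℕ) + 2 = 2 * k := by
      have : ((i:ℕ):ℝ) + ((j:ℕ):ℝ) + 2 = 2*(k:ℝ) := by linarith
      exact_mod_cast this
    have hij2 : (i:ℕ) < (j:ℕ) := hij
    rw [hij']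
    simp only [eps, Pi.add_apply, Fin.ext_iff]
    split_ifs <;> (try norm_num) <;> omega

section
variable {n k : ℕ} {S : Set (Fin n → ℝ)}
  (hS1 : ∀ u ∈ Broots n, htB n u = 2 * (k : ℝ) → u ∈ S)

include hS1

/-- difference roots with gap 2k are in S -/
lemma diff_mem_S (a b : Fin n) (hab : (b:ℕ) = (a:ℕ) + 2 * k) (hk : 1 ≤ k) :
    eps n b - eps n a ∈ S := by
  apply hS1
  · exact Or.inr ⟨a, b, by rw [Fin.lt_iff_val_lt_val]; omega, Or.inl rfl⟩
  · rw [htB_sub, htB_eps, htB_eps]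
    have : ((b:ℕ):ℝ) = ((a:ℕ):ℝ) + 2*(k:ℝ) := by exact_mod_cast congrArg (Nat.cast : ℕ → ℝ) hab
    push_cast at this ⊢
    linarith

/-- chains of differences -/
lemma chain_mem (hk : 1 ≤ k) : ∀ (t : ℕ) (a b : Fin n), (b:ℕ) = (a:ℕ) + 2 * k * t →
    eps n b - eps n a ∈ AddSubmonoid.closure S := by
  intro t
  induction t with
  | zero =>
    intro a b h
    have : b = a := by apply Fin.ext; omega
    rw [this, sub_self]
    exact AddSubmonoid.zero_mem _
  | succ t ih =>
    intro a b h
    rw [Nat.mul_succ] at h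
    have hc : (a:ℕ) + 2*k*t < n := by have := b.isLt; omega
    set c : Fin n := ⟨(a:ℕ) + 2*k*t, hc⟩ with hcdef
    have h1 : eps n c - eps n a ∈ AddSubmonoid.closure S := ih a c rfl
    have h2 : eps n b - eps n c ∈ AddSubmonoid.closure S := by
      apply AddSubmonoid.subset_closure
      apply diff_mem_S hS1 c b ?_ hk
      show (b:ℕ) = ((a:ℕ) + 2*k*t) + 2*k
      omega
    have : eps n b - eps n a = (eps n b - eps n c) + (eps n c - eps n a) := by abel
    rw [this]
    exact AddSubmonoid.add_mem _ h2 h1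

/-- single eps with height a positive multiple of 2k -/
lemma single_mem (hk : 1 ≤ k) (t : ℕ) (ht : 1 ≤ t) (b : Fin n) (hb : (b:ℕ) + 1 = 2 * k * t) :
    eps n b ∈ AddSubmonoid.closure S := by
  obtain ⟨s, rfl⟩ : ∃ s, t = s + 1 := ⟨t-1, by omega⟩
  rw [Nat.mul_succ] at hb
  have hc : 2*k - 1 < n := by have h1 := b.isLt; omega
  set c : Fin n := ⟨2*k - 1, hc⟩ with hcdef
  have h1 : eps n c ∈ S := by
    apply hS1
    · exact Or.inl ⟨c, Or.inl rfl⟩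
    · rw [htB_eps]
      show ((2*k-1 : ℕ):ℝ) + 1 = 2*(k:ℝ)
      have h2 : ((2*k-1 : ℕ):ℝ) = 2*(k:ℝ) - 1 := by
        have : (2*k-1 : ℕ) + 1 = 2*k := by omega
        have := congrArg (Nat.cast : ℕ → ℝ) this
        push_cast at this
        linarith
      rw [h2]; ring
  have h2 : eps n b - eps n c ∈ AddSubmonoid.closure S := by
    apply chain_mem hS1 hk s
    show (b:ℕ) = (2*k-1) + 2*k*s
    omega
  have : eps n b = (eps n b - eps n c) + eps n c := by abel
  rw [this]
  exact AddSubmonoid.add_mem _ h2 (AddSubmonoid.subset_closure h1)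

/-- pair roots of height exactly 2k -/
lemma pair_mem_S (a b : Fin n) (hab : a ≠ b) (h : (a:ℕ) + (b:ℕ) + 2 = 2 * k) :
    eps n a + eps n b ∈ S := by
  have hht : htB n (eps n a + eps n b) = 2*(k:ℝ) := by
    rw [htB_add, htB_eps, htB_eps]
    have : (((a:ℕ) + (b:ℕ) + 2 : ℕ) : ℝ) = ((2*k : ℕ):ℝ) := congrArg (Nat.cast : ℕ → ℝ) h
    push_cast at this
    linarith
  apply hS1 _ _ hht
  rcases lt_or_gt_of_ne hab with hlt | hgt
  · exact Or.inr ⟨a, b, hlt, Or.inr (Or.inr (Or.inl (by rw [add_comm])))⟩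
  · exact Or.inr ⟨b, a, hgt, Or.inr (Or.inr (Or.inl rfl))⟩

end

section
variable {n k : ℕ} {S : Set (Fin n → ℝ)}
  (hS1 : ∀ u ∈ Broots n, htB n u = 2 * (k : ℝ) → u ∈ S)
  (hS2 : ∀ h1 : k - 1 < n, ∀ h2 : 3*k - 1 < n,
      eps n ⟨k-1, h1⟩ + eps n ⟨3*k-1, h2⟩ ∈ S)

include hS1 hS2

lemma form3_mem (hk : 1 ≤ k) : ∀ (t : ℕ), 1 ≤ t → ∀ i j : Fin n, i < j →
    (i:ℕ) + (j:ℕ) + 2 = 2 * k * t →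
    eps n j + eps n i ∈ AddSubmonoid.closure S := by
  intro t
  induction t with
  | zero => omega
  | succ t ih =>
    intro _ i j hij h
    rw [Nat.mul_succ] at h
    have hijn : (i:ℕ) < (j:ℕ) := hij
    rcases Nat.lt_or_ge t 1 with ht0 | ht1
    · -- t = 0 : base case, height exactly 2k
      have ht0' : t = 0 := by omega
      subst ht0'
      simp only [Nat.mul_zero, Nat.zero_add] at h
      exact AddSubmonoid.subset_closure
        (pair_mem_S hS1 j i (by exact fun hh => absurd hh (Fin.ne_of_gt hij)) (by omega))
    · -- t ≥ 1
      rcases Nat.lt_trichotomy ((i:ℕ) + 1) (2*k) with hlt | heq | hgt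
      · -- i₁ < 2k
        rcases eq_or_ne ((i:ℕ) + 1) k with hik | hik
        · -- i₁ = k : use δ
          have hq : 3*k - 1 < n := by
            have h1 := j.isLt
            have h2 : 2*k ≤ 2*k*t := Nat.le_mul_of_pos_right _ (by omega)
            omega
          have hp : k - 1 < n := by omega
          have hip : i = ⟨k-1, hp⟩ := by apply Fin.ext; simp; omega
          have hchain : eps n j - eps n ⟨3*k-1, hq⟩ ∈ AddSubmonoid.closure S := by
            apply chain_mem hS1 hk (t-1)
            show (j:ℕ) = 3*k-1 + 2*k*(t-1)
            obtain ⟨s, rfl⟩ : ∃ s, t = s + 1 := ⟨t-1, by omega⟩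
            simp only [Nat.add_sub_cancel]
            rw [Nat.mul_succ] at h
            omega
          have hδ : eps n ⟨k-1, hp⟩ + eps n ⟨3*k-1, hq⟩ ∈ AddSubmonoid.closure S :=
            AddSubmonoid.subset_closure (hS2 hp hq)
          have : eps n j + eps n i =
              (eps n j - eps n ⟨3*k-1, hq⟩) + (eps n ⟨k-1, hp⟩ + eps n ⟨3*k-1, hq⟩) := by
            rw [hip]; abel
          rw [this]
          exact AddSubmonoid.add_mem _ hchain hδ
        · -- i₁ < 2k, i₁ ≠ k : use complementary index s₀ = 2k - i₁ - 1
          have hs : 2*k - ((i:ℕ)+1) - 1 < n := by omega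
          set s0 : Fin n := ⟨2*k - ((i:ℕ)+1) - 1, hs⟩ with hs0
          have hpair : eps n s0 + eps n i ∈ S := by
            apply pair_mem_S hS1
            · intro hh
              have := congrArg Fin.val hh
              simp [hs0] at this
              omega
            · show (2*k - ((i:ℕ)+1) - 1) + (i:ℕ) + 2 = 2*k
              omega
          have hchain : eps n j - eps n s0 ∈ AddSubmonoid.closure S := by
            apply chain_mem hS1 hk t
            show (j:ℕ) = (2*k - ((i:ℕ)+1) - 1) + 2*k*t
            omega
          have : eps n j + eps n i = (eps n j - eps n s0) + (eps n s0 + eps n i) := by abel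
          rw [this]
          exact AddSubmonoid.add_mem _ hchain (AddSubmonoid.subset_closure hpair)
      · -- i₁ = 2k : eps i ∈ S, eps j by single_mem
        have h1 : eps n i ∈ S := by
          apply hS1
          · exact Or.inl ⟨i, Or.inl rfl⟩
          · rw [htB_eps]
            have : (((i:ℕ)+1 : ℕ) : ℝ) = ((2*k : ℕ) : ℝ) := by exact_mod_cast congrArg (Nat.cast : ℕ → ℝ) heq
            push_cast at this
            linarith
        have h2 : eps n j ∈ AddSubmonoid.closure S := by
          apply single_mem hS1 hk t ht1 j
          omega
        exact AddSubmonoid.add_mem _ h2 (AddSubmonoid.subset_closure h1)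
      · -- i₁ > 2k : reduce i by 2k
        have hi2 : (i:ℕ) - 2*k < n := by have := i.isLt; omega
        set i2 : Fin n := ⟨(i:ℕ) - 2*k, hi2⟩ with hi2def
        have hdiff : eps n i - eps n i2 ∈ S := by
          apply diff_mem_S hS1 i2 i ?_ hk
          show (i:ℕ) = ((i:ℕ) - 2*k) + 2*k
          omega
        have hrec : eps n j + eps n i2 ∈ AddSubmonoid.closure S := by
          apply ih ht1 i2 j
          · show ((i:ℕ) - 2*k) < (j:ℕ); omega
          · show ((i:ℕ) - 2*k) + (j:ℕ) + 2 = 2*k*t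
            omega
        have : eps n j + eps n i = (eps n j + eps n i2) + (eps n i - eps n i2) := by abel
        rw [this]
        exact AddSubmonoid.add_mem _ hrec (AddSubmonoid.subset_closure hdiff)

end

/-- extract a natural multiplier from an integer one -/
lemma mult_extract (k c : ℕ) (l : ℤ) (h : (c:ℝ) = 2*(k:ℝ)*l) (hc : 1 ≤ c) :
    ∃ t : ℕ, 1 ≤ t ∧ c = 2*k*t := by
  have hz : (c:ℤ) = 2*(k:ℤ)*l := by exact_mod_cast h
  have hl0 : 0 < l := by
    rcases le_or_gt l 0 with h0 | h0
    · exfalso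
      have h1 : 2*(k:ℤ)*l ≤ 0 := mul_nonpos_of_nonneg_of_nonpos (by positivity) h0
      have h2 : (0:ℤ) < (c:ℤ) := by exact_mod_cast hc
      linarith
    · exact h0
  refine ⟨l.toNat, by omega, ?_⟩
  have hl : (l.toNat : ℤ) = l := Int.toNat_of_nonneg hl0.le
  have : (c:ℤ) = 2*(k:ℤ)*(l.toNat : ℤ) := by rw [hl]; exact hz
  exact_mod_cast this

/-- let `n ≥ 3`, `k ≥ 1` with `3k ≤ n`, and `m = 2k`. Then
`ε_k + ε_{3k}` is a root of `Bₙ` of height `2m` which is not the sum of two roots of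
height `m`, and every positive root of `Bₙ` whose height is divisible by `m` is a sum
of elements of `R_m ∪ {ε_k + ε_{3k}}`. -/
theorem stmt8 (n k : ℕ) (hn : 3 ≤ n) (hk : 1 ≤ k) (h3k : 3 * k ≤ n) :
    let m : ℕ := 2 * k
    let δ : Fin n → ℝ := eps n ⟨k - 1, by omega⟩ + eps n ⟨3 * k - 1, by omega⟩
    δ ∈ Broots n ∧ htB n δ = (2 * m : ℕ) ∧
    (¬ ∃ a b : Fin n → ℝ, a ∈ Broots n ∧ htB n a = (m : ℝ) ∧
        b ∈ Broots n ∧ htB n b = (m : ℝ) ∧ δ = a + b) ∧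
    (∀ v ∈ Broots n, 0 < htB n v → (∃ l : ℤ, htB n v = (m : ℝ) * l) →
      v ∈ AddSubmonoid.closure ({u ∈ Broots n | htB n u = (m : ℝ)} ∪ {δ})) := by
  intro m δ
  have hp : k - 1 < n := by omega
  have hq : 3 * k - 1 < n := by omega
  have hδdef : δ = eps n ⟨k-1, hp⟩ + eps n ⟨3*k-1, hq⟩ := rfl
  have hmR : (m : ℝ) = 2*(k:ℝ) := by show ((2*k : ℕ):ℝ) = 2*(k:ℝ); push_cast; ring
  -- cast facts
  have hc1 : ((k-1 : ℕ):ℝ) + 1 = (k:ℝ) := by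
    have := congrArg (Nat.cast : ℕ → ℝ) (show (k-1)+1 = k by omega)
    push_cast at this; linarith
  have hc2 : ((3*k-1 : ℕ):ℝ) + 1 = 3*(k:ℝ) := by
    have := congrArg (Nat.cast : ℕ → ℝ) (show (3*k-1)+1 = 3*k by omega)
    push_cast at this; linarith
  refine ⟨?_, ?_, ?_, ?_⟩
  · -- δ is a root
    refine Or.inr ⟨⟨k-1, hp⟩, ⟨3*k-1, hq⟩, ?_, Or.inr (Or.inr (Or.inl ?_))⟩
    · rw [Fin.lt_iff_val_lt_val]; show k - 1 < 3*k - 1; omega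
    · rw [hδdef, add_comm]
  · -- height of δ
    rw [hδdef, htB_add, htB_eps, htB_eps]
    show _ = ((2*(2*k) : ℕ):ℝ)
    push_cast
    linarith [hc1, hc2]
  · -- not a sum of two roots of height m
    rintro ⟨a, b, ha, hta, hb, htb, heq⟩
    rw [hmR] at hta htb
    have hA := pairing_nonpos n k hk h3k a ha hta
    have hB := pairing_nonpos n k hk h3k b hb htb
    have hPQ : (⟨k-1, hp⟩ : Fin n) ≠ ⟨3*k-1, hq⟩ := by
      intro hh
      have := congrArg Fin.val hh
      simp only [Fin.val_mk] at this
      omega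
    have h1 := congrFun heq ⟨k-1, hp⟩
    have h2 := congrFun heq ⟨3*k-1, hq⟩
    rw [hδdef] at h1 h2
    simp only [Pi.add_apply, eps, if_pos rfl, if_neg hPQ, if_neg (Ne.symm hPQ)] at h1 h2
    norm_num at h1 h2
    linarith
  · -- every positive root of height divisible by m is in the closure
    intro v hv hpos ⟨l, hl⟩
    rw [hmR] at hl
    set S : Set (Fin n → ℝ) := {u ∈ Broots n | htB n u = (m : ℝ)} ∪ {δ} with hS
    have hS1 : ∀ u ∈ Broots n, htB n u = 2 * (k : ℝ) → u ∈ S := by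
      intro u hu hht
      exact Or.inl ⟨hu, by rw [hmR]; exact hht⟩
    have hS2 : ∀ h1 : k - 1 < n, ∀ h2 : 3*k - 1 < n,
        eps n ⟨k-1, h1⟩ + eps n ⟨3*k-1, h2⟩ ∈ S := by
      intro h1 h2
      exact Or.inr rfl
    rcases classify n v hv hpos with ⟨i, hi⟩ | ⟨i, j, hij, hij'⟩ | ⟨i, j, hij, hij'⟩
    · -- v = eps i
      rw [hi, htB_eps] at hl
      obtain ⟨t, ht1, ht2⟩ := mult_extract k ((i:ℕ)+1) l (by push_cast; linarith) (by omega)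
      rw [hi]
      exact single_mem hS1 hk t ht1 i ht2
    · -- v = eps j - eps i
      rw [hij', htB_sub, htB_eps, htB_eps] at hl
      have hijn : (i:ℕ) < (j:ℕ) := hij
      have hcast : (((j:ℕ) - (i:ℕ) : ℕ) : ℝ) = 2*(k:ℝ)*l := by
        rw [Nat.cast_sub hijn.le]
        push_cast at hl ⊢
        linarith
      obtain ⟨t, ht1, ht2⟩ := mult_extract k ((j:ℕ) - (i:ℕ)) l hcast (by omega)
      rw [hij']
      apply chain_mem hS1 hk t i j
      omega
    · -- v = eps j + eps i
      rw [hij', htB_add, htB_eps, htB_eps] at hl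
      have hijn : (i:ℕ) < (j:ℕ) := hij
      have hcast : (((i:ℕ) + (j:ℕ) + 2 : ℕ) : ℝ) = 2*(k:ℝ)*l := by
        push_cast at hl ⊢
        linarith
      obtain ⟨t, ht1, ht2⟩ := mult_extract k ((i:ℕ) + (j:ℕ) + 2) l hcast (by omega)
      rw [hij']
      exact form3_mem hS1 hS2 hk t ht1 i j hij ht2
end
end

section
/- In E6, the vector δ_6 = α_1 + α_2 + α_3 + α_4 + α_5 + α_6 (coefficient vector (1,1,1,1,1,1)) is a root of height 6 which is not the sum of two roots of height 3. Moreover, the number of positive roots of E6 whose height is divisible by 3 is 9, and every positive root whose height is divisible by 3 can be written as a sum of elements of R_3 ∪ {δ_6}. -/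
open Matrix

/-- The Cartan matrix of type `E₆` in Bourbaki numbering (index `i : Fin 6` is node `i+1`):
the chain is `1 - 3 - 4 - 5 - 6` and node `2` is joined to node `4`. -/
def cartanE6 : Matrix (Fin 6) (Fin 6) ℤ :=
  !![ 2,  0, -1,  0,  0,  0;
      0,  2,  0, -1,  0,  0;
     -1,  0,  2, -1,  0,  0;
      0, -1, -1,  2, -1,  0;
      0,  0,  0, -1,  2, -1;
      0,  0,  0,  0, -1,  2]

/-- The roots of `E₆`, identified with their coefficient vectors `c` with respect to the
simple roots: `R = {c ∈ ℤ^6 : cᵀ A c = 2}`. -/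
def rootsE6 : Set (Fin 6 → ℤ) := {c | c ⬝ᵥ cartanE6.mulVec c = 2}

/-- The height of a coefficient vector. -/
def htE6 (c : Fin 6 → ℤ) : ℤ := ∑ i, c i

/-- `δ₆ = α₁ + α₂ + α₃ + α₄ + α₅ + α₆`, coefficient vector `(1,1,1,1,1,1)`. -/
def δ₆ : Fin 6 → ℤ := ![1, 1, 1, 1, 1, 1]

/-! ### Auxiliary machinery -/

def QE6 (c : Fin 6 → ℤ) : ℤ :=
  2*((c 0)^2+(c 1)^2+(c 2)^2+(c 3)^2+(c 4)^2+(c 5)^2)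
    - 2*((c 0)*(c 2)+(c 1)*(c 3)+(c 2)*(c 3)+(c 3)*(c 4)+(c 4)*(c 5))

lemma eta6 (c : Fin 6 → ℤ) : c = ![c 0, c 1, c 2, c 3, c 4, c 5] := by
  funext i; fin_cases i <;> rfl

lemma qpoly (x0 x1 x2 x3 x4 x5 : ℤ) :
    ![x0,x1,x2,x3,x4,x5] ⬝ᵥ cartanE6.mulVec ![x0,x1,x2,x3,x4,x5] =
      2*(x0^2+x1^2+x2^2+x3^2+x4^2+x5^2) - 2*(x0*x2+x1*x3+x2*x3+x3*x4+x4*x5) := by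
  simp [cartanE6, Matrix.cons_mulVec, Matrix.cons_dotProduct, Matrix.empty_mulVec,
    Matrix.dotProduct_of_isEmpty, Matrix.vecHead, Matrix.vecTail, Function.comp]
  ring

lemma mem_rootsE6_iff (c : Fin 6 → ℤ) : c ∈ rootsE6 ↔ QE6 c = 2 := by
  have h := qpoly (c 0) (c 1) (c 2) (c 3) (c 4) (c 5)
  rw [← eta6 c] at h
  simp [rootsE6, h, QE6]

lemma ht_eq (c : Fin 6 → ℤ) : htE6 c = c 0 + c 1 + c 2 + c 3 + c 4 + c 5 := by
  simp [htE6, Fin.sum_univ_six]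

lemma absLe (x b : ℤ) (hb : 0 ≤ b) (h : x^2 < (b+1)^2) : -b ≤ x ∧ x ≤ b := by
  constructor <;> nlinarith [sq_nonneg (x+b+1), sq_nonneg (x-b-1)]

lemma boundsE6 (x0 x1 x2 x3 x4 x5 : ℤ)
    (h : 2*(x0^2+x1^2+x2^2+x3^2+x4^2+x5^2) - 2*(x0*x2+x1*x3+x2*x3+x3*x4+x4*x5) = 2) :
    (-1 ≤ x0 ∧ x0 ≤ 1) ∧ (-2 ≤ x1 ∧ x1 ≤ 2) ∧ (-2 ≤ x2 ∧ x2 ≤ 2) ∧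
    (-3 ≤ x3 ∧ x3 ≤ 3) ∧ (-2 ≤ x4 ∧ x4 ≤ 2) ∧ (-1 ≤ x5 ∧ x5 ≤ 1) := by
  refine ⟨absLe _ _ (by norm_num) ?_, absLe _ _ (by norm_num) ?_, absLe _ _ (by norm_num) ?_,
    absLe _ _ (by norm_num) ?_, absLe _ _ (by norm_num) ?_, absLe _ _ (by norm_num) ?_⟩
  · nlinarith [sq_nonneg (5*x0-4*x2), sq_nonneg (2*x1-x3), sq_nonneg (6*x2-5*x3),
      sq_nonneg (2*x3-3*x4), sq_nonneg (x4-2*x5)]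
  · nlinarith [sq_nonneg (2*x0-x2), sq_nonneg (3*x1-2*x3), sq_nonneg (3*x2-2*x3),
      sq_nonneg (2*x3-3*x4), sq_nonneg (x4-2*x5)]
  · nlinarith [sq_nonneg (2*x0-x2), sq_nonneg (2*x1-x3), sq_nonneg (6*x2-5*x3),
      sq_nonneg (2*x3-3*x4), sq_nonneg (x4-2*x5)]
  · nlinarith [sq_nonneg (2*x0-x2), sq_nonneg (2*x1-x3), sq_nonneg (3*x2-2*x3),
      sq_nonneg (2*x3-3*x4), sq_nonneg (x4-2*x5)]
  · nlinarith [sq_nonneg (2*x0-x2), sq_nonneg (2*x1-x3), sq_nonneg (3*x2-2*x3),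
      sq_nonneg (5*x3-6*x4), sq_nonneg (x4-2*x5)]
  · nlinarith [sq_nonneg (2*x0-x2), sq_nonneg (2*x1-x3), sq_nonneg (3*x2-2*x3),
      sq_nonneg (5*x3-6*x4), sq_nonneg (4*x4-5*x5)]

def chk3 (x0 x1 x2 x3 x4 x5 : ℤ) : Bool :=
  !(2*(x0^2+x1^2+x2^2+x3^2+x4^2+x5^2) - 2*(x0*x2+x1*x3+x2*x3+x3*x4+x4*x5) == 2)
  || !(x0+x1+x2+x3+x4+x5 == 3)
  || (x0==0 && x1==0 && x2==0 && x3==1 && x4==1 && x5==1)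
  || (x0==0 && x1==0 && x2==1 && x3==1 && x4==1 && x5==0)
  || (x0==0 && x1==1 && x2==0 && x3==1 && x4==1 && x5==0)
  || (x0==0 && x1==1 && x2==1 && x3==1 && x4==0 && x5==0)
  || (x0==1 && x1==0 && x2==1 && x3==1 && x4==0 && x5==0)

set_option maxRecDepth 10000 in
lemma enum3 : ∀ (a : Fin 3) (b : Fin 5) (c : Fin 5) (d : Fin 7) (e : Fin 5) (f : Fin 3),
    chk3 ((a:ℤ)-1) ((b:ℤ)-2) ((c:ℤ)-2) ((d:ℤ)-3) ((e:ℤ)-2) ((f:ℤ)-1) = true := by decide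

set_option maxHeartbeats 1000000 in
lemma chk3_prop (x0 x1 x2 x3 x4 x5 : ℤ)
    (h0 : -1 ≤ x0 ∧ x0 ≤ 1) (h1 : -2 ≤ x1 ∧ x1 ≤ 2) (h2 : -2 ≤ x2 ∧ x2 ≤ 2)
    (h3 : -3 ≤ x3 ∧ x3 ≤ 3) (h4 : -2 ≤ x4 ∧ x4 ≤ 2) (h5 : -1 ≤ x5 ∧ x5 ≤ 1)
    (hq : 2*(x0^2+x1^2+x2^2+x3^2+x4^2+x5^2) - 2*(x0*x2+x1*x3+x2*x3+x3*x4+x4*x5) = 2)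
    (hs : x0+x1+x2+x3+x4+x5 = 3) :
    (x0=0 ∧ x1=0 ∧ x2=0 ∧ x3=1 ∧ x4=1 ∧ x5=1) ∨
    (x0=0 ∧ x1=0 ∧ x2=1 ∧ x3=1 ∧ x4=1 ∧ x5=0) ∨
    (x0=0 ∧ x1=1 ∧ x2=0 ∧ x3=1 ∧ x4=1 ∧ x5=0) ∨
    (x0=0 ∧ x1=1 ∧ x2=1 ∧ x3=1 ∧ x4=0 ∧ x5=0) ∨
    (x0=1 ∧ x1=0 ∧ x2=1 ∧ x3=1 ∧ x4=0 ∧ x5=0) := by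
  have h := enum3 ⟨(x0+1).toNat, by omega⟩ ⟨(x1+2).toNat, by omega⟩ ⟨(x2+2).toNat, by omega⟩
    ⟨(x3+3).toNat, by omega⟩ ⟨(x4+2).toNat, by omega⟩ ⟨(x5+1).toNat, by omega⟩
  simp only [chk3, Fin.val_mk, Bool.or_eq_true, Bool.and_eq_true, Bool.not_eq_true',
    beq_iff_eq, beq_eq_false_iff_ne, ne_eq] at h
  have e0 : ((x0+1).toNat : ℤ) = x0 + 1 := by omega
  have e1 : ((x1+2).toNat : ℤ) = x1 + 2 := by omega
  have e2 : ((x2+2).toNat : ℤ) = x2 + 2 := by omega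
  have e3 : ((x3+3).toNat : ℤ) = x3 + 3 := by omega
  have e4 : ((x4+2).toNat : ℤ) = x4 + 2 := by omega
  have e5 : ((x5+1).toNat : ℤ) = x5 + 1 := by omega
  rw [e0, e1, e2, e3, e4, e5] at h
  ring_nf at hq h
  simp only [hq, hs, not_true, false_or, or_false] at h
  obtain ((((h|h)|h)|h)|h) := h
  · exact Or.inl (by omega)
  · exact Or.inr <| Or.inl (by omega)
  · exact Or.inr <| Or.inr <| Or.inl (by omega)
  · exact Or.inr <| Or.inr <| Or.inr <| Or.inl (by omega)
  · exact Or.inr <| Or.inr <| Or.inr <| Or.inr (by omega)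

def chk9 (x0 x1 x2 x3 x4 x5 : ℤ) : Bool :=
  !(2*(x0^2+x1^2+x2^2+x3^2+x4^2+x5^2) - 2*(x0*x2+x1*x3+x2*x3+x3*x4+x4*x5) == 2)
  || !((x0+x1+x2+x3+x4+x5) % 3 == 0)
  || (x0==0 && x1==0 && x2==0 && x3==1 && x4==1 && x5==1)
  || (x0==0 && x1==0 && x2==1 && x3==1 && x4==1 && x5==0)
  || (x0==0 && x1==1 && x2==0 && x3==1 && x4==1 && x5==0)
  || (x0==0 && x1==1 && x2==1 && x3==1 && x4==0 && x5==0)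
  || (x0==1 && x1==0 && x2==1 && x3==1 && x4==0 && x5==0)
  || (x0==0 && x1==1 && x2==1 && x3==2 && x4==1 && x5==1)
  || (x0==1 && x1==1 && x2==1 && x3==1 && x4==1 && x5==1)
  || (x0==1 && x1==1 && x2==1 && x3==2 && x4==1 && x5==0)
  || (x0==1 && x1==1 && x2==2 && x3==2 && x4==2 && x5==1)

set_option maxRecDepth 10000 in
lemma enum9 : ∀ (a : Fin 2) (b : Fin 3) (c : Fin 3) (d : Fin 4) (e : Fin 3) (f : Fin 2),
    chk9 (a:ℤ) (b:ℤ) (c:ℤ) (d:ℤ) (e:ℤ) (f:ℤ) = true := by decide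

set_option maxHeartbeats 1000000 in
lemma chk9_prop (x0 x1 x2 x3 x4 x5 : ℤ)
    (l0 : 0 ≤ x0) (l1 : 0 ≤ x1) (l2 : 0 ≤ x2) (l3 : 0 ≤ x3) (l4 : 0 ≤ x4) (l5 : 0 ≤ x5)
    (u0 : x0 ≤ 1) (u1 : x1 ≤ 2) (u2 : x2 ≤ 2) (u3 : x3 ≤ 3) (u4 : x4 ≤ 2) (u5 : x5 ≤ 1)
    (hq : 2*(x0^2+x1^2+x2^2+x3^2+x4^2+x5^2) - 2*(x0*x2+x1*x3+x2*x3+x3*x4+x4*x5) = 2)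
    (hs : (x0+x1+x2+x3+x4+x5) % 3 = 0) :
    (x0=0 ∧ x1=0 ∧ x2=0 ∧ x3=1 ∧ x4=1 ∧ x5=1) ∨
    (x0=0 ∧ x1=0 ∧ x2=1 ∧ x3=1 ∧ x4=1 ∧ x5=0) ∨
    (x0=0 ∧ x1=1 ∧ x2=0 ∧ x3=1 ∧ x4=1 ∧ x5=0) ∨
    (x0=0 ∧ x1=1 ∧ x2=1 ∧ x3=1 ∧ x4=0 ∧ x5=0) ∨
    (x0=1 ∧ x1=0 ∧ x2=1 ∧ x3=1 ∧ x4=0 ∧ x5=0) ∨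
    (x0=0 ∧ x1=1 ∧ x2=1 ∧ x3=2 ∧ x4=1 ∧ x5=1) ∨
    (x0=1 ∧ x1=1 ∧ x2=1 ∧ x3=1 ∧ x4=1 ∧ x5=1) ∨
    (x0=1 ∧ x1=1 ∧ x2=1 ∧ x3=2 ∧ x4=1 ∧ x5=0) ∨
    (x0=1 ∧ x1=1 ∧ x2=2 ∧ x3=2 ∧ x4=2 ∧ x5=1) := by
  have h := enum9 ⟨x0.toNat, by omega⟩ ⟨x1.toNat, by omega⟩ ⟨x2.toNat, by omega⟩
    ⟨x3.toNat, by omega⟩ ⟨x4.toNat, by omega⟩ ⟨x5.toNat, by omega⟩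
  simp only [chk9, Fin.val_mk, Bool.or_eq_true, Bool.and_eq_true, Bool.not_eq_true',
    beq_iff_eq, beq_eq_false_iff_ne, ne_eq] at h
  have e0 : (x0.toNat : ℤ) = x0 := by omega
  have e1 : (x1.toNat : ℤ) = x1 := by omega
  have e2 : (x2.toNat : ℤ) = x2 := by omega
  have e3 : (x3.toNat : ℤ) = x3 := by omega
  have e4 : (x4.toNat : ℤ) = x4 := by omega
  have e5 : (x5.toNat : ℤ) = x5 := by omega
  rw [e0, e1, e2, e3, e4, e5] at h
  ring_nf at hq h
  simp only [hq, hs, not_true, false_or, or_false] at h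
  obtain ((((((((h|h)|h)|h)|h)|h)|h)|h)|h) := h
  · exact Or.inl (by omega)
  · exact Or.inr <| Or.inl (by omega)
  · exact Or.inr <| Or.inr <| Or.inl (by omega)
  · exact Or.inr <| Or.inr <| Or.inr <| Or.inl (by omega)
  · exact Or.inr <| Or.inr <| Or.inr <| Or.inr <| Or.inl (by omega)
  · exact Or.inr <| Or.inr <| Or.inr <| Or.inr <| Or.inr <| Or.inl (by omega)
  · exact Or.inr <| Or.inr <| Or.inr <| Or.inr <| Or.inr <| Or.inr <| Or.inl (by omega)
  · exact Or.inr <| Or.inr <| Or.inr <| Or.inr <| Or.inr <| Or.inr <| Or.inr <| Or.inl (by omega)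
  · exact Or.inr <| Or.inr <| Or.inr <| Or.inr <| Or.inr <| Or.inr <| Or.inr <| Or.inr (by omega)

/-- The nine positive roots of `E₆` whose height is divisible by `3`. -/
def rootF : Finset (Fin 6 → ℤ) :=
  {![0,0,0,1,1,1], ![0,0,1,1,1,0], ![0,1,0,1,1,0], ![0,1,1,1,0,0], ![1,0,1,1,0,0],
   ![0,1,1,2,1,1], ![1,1,1,1,1,1], ![1,1,1,2,1,0], ![1,1,2,2,2,1]}

lemma mem_rootF (c : Fin 6 → ℤ) (hc : c ∈ rootsE6) (hpos : ∀ i, 0 ≤ c i)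
    (hdvd : 3 ∣ htE6 c) :
    c = ![0,0,0,1,1,1] ∨ c = ![0,0,1,1,1,0] ∨ c = ![0,1,0,1,1,0] ∨ c = ![0,1,1,1,0,0] ∨
    c = ![1,0,1,1,0,0] ∨ c = ![0,1,1,2,1,1] ∨ c = ![1,1,1,1,1,1] ∨ c = ![1,1,1,2,1,0] ∨
    c = ![1,1,2,2,2,1] := by
  have hq : QE6 c = 2 := (mem_rootsE6_iff c).mp hc
  rw [QE6] at hq
  obtain ⟨b0, b1, b2, b3, b4, b5⟩ := boundsE6 _ _ _ _ _ _ hq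
  have hsum := ht_eq c
  have hs : (c 0 + c 1 + c 2 + c 3 + c 4 + c 5) % 3 = 0 := by omega
  have key := chk9_prop (c 0) (c 1) (c 2) (c 3) (c 4) (c 5)
    (hpos 0) (hpos 1) (hpos 2) (hpos 3) (hpos 4) (hpos 5)
    b0.2 b1.2 b2.2 b3.2 b4.2 b5.2 hq hs
  have he := eta6 c
  obtain h|h|h|h|h|h|h|h|h := key <;>
    obtain ⟨r0, r1, r2, r3, r4, r5⟩ := h
  · exact Or.inl (by rw [he, r0, r1, r2, r3, r4, r5])
  · exact Or.inr <| Or.inl (by rw [he, r0, r1, r2, r3, r4, r5])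
  · exact Or.inr <| Or.inr <| Or.inl (by rw [he, r0, r1, r2, r3, r4, r5])
  · exact Or.inr <| Or.inr <| Or.inr <| Or.inl (by rw [he, r0, r1, r2, r3, r4, r5])
  · exact Or.inr <| Or.inr <| Or.inr <| Or.inr <| Or.inl (by rw [he, r0, r1, r2, r3, r4, r5])
  · exact Or.inr <| Or.inr <| Or.inr <| Or.inr <| Or.inr <| Or.inl
      (by rw [he, r0, r1, r2, r3, r4, r5])
  · exact Or.inr <| Or.inr <| Or.inr <| Or.inr <| Or.inr <| Or.inr <| Or.inl
      (by rw [he, r0, r1, r2, r3, r4, r5])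
  · exact Or.inr <| Or.inr <| Or.inr <| Or.inr <| Or.inr <| Or.inr <| Or.inr <| Or.inl
      (by rw [he, r0, r1, r2, r3, r4, r5])
  · exact Or.inr <| Or.inr <| Or.inr <| Or.inr <| Or.inr <| Or.inr <| Or.inr <| Or.inr
      (by rw [he, r0, r1, r2, r3, r4, r5])

lemma set_eq_rootF :
    {c ∈ rootsE6 | (∀ i, 0 ≤ c i) ∧ 3 ∣ htE6 c} = (rootF : Set (Fin 6 → ℤ)) := by
  ext c
  simp only [Set.mem_setOf_eq, rootF, Finset.coe_insert, Set.mem_insert_iff,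
    Finset.coe_singleton, Set.mem_singleton_iff]
  constructor
  · rintro ⟨hc, hpos, hdvd⟩
    exact mem_rootF c hc hpos hdvd
  · rintro (rfl|rfl|rfl|rfl|rfl|rfl|rfl|rfl|rfl) <;>
      exact ⟨(mem_rootsE6_iff _).mpr (by decide), by decide, by decide⟩

/-- in `E₆`, `δ₆` is a root of height `6` which is not the sum of two
roots of height `3`; the number of positive roots of height divisible by `3` is `9`,
and every positive root of height divisible by `3` is a sum of elements of
`R₃ ∪ {δ₆}`. -/
theorem stmt14 :
    δ₆ ∈ rootsE6 ∧ htE6 δ₆ = 6 ∧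
    (¬ ∃ a b : Fin 6 → ℤ, a ∈ rootsE6 ∧ htE6 a = 3 ∧ b ∈ rootsE6 ∧ htE6 b = 3 ∧
        δ₆ = a + b) ∧
    {c ∈ rootsE6 | (∀ i, 0 ≤ c i) ∧ 3 ∣ htE6 c}.ncard = 9 ∧
    (∀ c ∈ rootsE6, (∀ i, 0 ≤ c i) → 3 ∣ htE6 c →
      c ∈ AddSubmonoid.closure ({a ∈ rootsE6 | htE6 a = 3} ∪ {δ₆})) := by
  refine ⟨(mem_rootsE6_iff _).mpr (by decide), by decide, ?_, ?_, ?_⟩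
  · rintro ⟨a, b, ha, hta, hb, htb, heq⟩
    have hqa : QE6 a = 2 := (mem_rootsE6_iff a).mp ha
    have hqb : QE6 b = 2 := (mem_rootsE6_iff b).mp hb
    rw [QE6] at hqa hqb
    obtain ⟨a0, a1, a2, a3, a4, a5⟩ := boundsE6 _ _ _ _ _ _ hqa
    obtain ⟨c0, c1, c2, c3, c4, c5⟩ := boundsE6 _ _ _ _ _ _ hqb
    have hsa := ht_eq a
    have hsb := ht_eq b
    have da := chk3_prop (a 0) (a 1) (a 2) (a 3) (a 4) (a 5) a0 a1 a2 a3 a4 a5 hqa (by omega)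
    have db := chk3_prop (b 0) (b 1) (b 2) (b 3) (b 4) (b 5) c0 c1 c2 c3 c4 c5 hqb (by omega)
    have k0 : a 0 + b 0 = 1 := by have := congrFun heq 0; simp [δ₆] at this; omega
    have k1 : a 1 + b 1 = 1 := by have := congrFun heq 1; simp [δ₆] at this; omega
    have k2 : a 2 + b 2 = 1 := by have := congrFun heq 2; simp [δ₆] at this; omega
    have k3 : a 3 + b 3 = 1 := by have := congrFun heq 3; simp [δ₆] at this; omega
    have k4 : a 4 + b 4 = 1 := by have := congrFun heq 4; simp [δ₆] at this; omega
    have k5 : a 5 + b 5 = 1 := by have := congrFun heq 5; simp [δ₆] at this; omega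
    rcases da with h|h|h|h|h <;> rcases db with g|g|g|g|g <;> omega
  · rw [set_eq_rootF, Set.ncard_coe_finset]
    decide
  · intro c hc hpos hdvd
    have key := mem_rootF c hc hpos hdvd
    have m1 : ![0,0,0,1,1,1] ∈ ({a ∈ rootsE6 | htE6 a = 3} ∪ {δ₆} : Set (Fin 6 → ℤ)) :=
      Or.inl ⟨(mem_rootsE6_iff _).mpr (by decide), by decide⟩
    have m2 : ![0,0,1,1,1,0] ∈ ({a ∈ rootsE6 | htE6 a = 3} ∪ {δ₆} : Set (Fin 6 → ℤ)) :=
      Or.inl ⟨(mem_rootsE6_iff _).mpr (by decide), by decide⟩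
    have m3 : ![0,1,0,1,1,0] ∈ ({a ∈ rootsE6 | htE6 a = 3} ∪ {δ₆} : Set (Fin 6 → ℤ)) :=
      Or.inl ⟨(mem_rootsE6_iff _).mpr (by decide), by decide⟩
    have m4 : ![0,1,1,1,0,0] ∈ ({a ∈ rootsE6 | htE6 a = 3} ∪ {δ₆} : Set (Fin 6 → ℤ)) :=
      Or.inl ⟨(mem_rootsE6_iff _).mpr (by decide), by decide⟩
    have m5 : ![1,0,1,1,0,0] ∈ ({a ∈ rootsE6 | htE6 a = 3} ∪ {δ₆} : Set (Fin 6 → ℤ)) :=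
      Or.inl ⟨(mem_rootsE6_iff _).mpr (by decide), by decide⟩
    have m6 : δ₆ ∈ ({a ∈ rootsE6 | htE6 a = 3} ∪ {δ₆} : Set (Fin 6 → ℤ)) := Or.inr rfl
    obtain rfl|rfl|rfl|rfl|rfl|rfl|rfl|rfl|rfl := key
    · exact AddSubmonoid.subset_closure m1
    · exact AddSubmonoid.subset_closure m2
    · exact AddSubmonoid.subset_closure m3
    · exact AddSubmonoid.subset_closure m4
    · exact AddSubmonoid.subset_closure m5
    · have e : (![0,1,1,2,1,1] : Fin 6 → ℤ) = ![0,0,0,1,1,1] + ![0,1,1,1,0,0] := by decide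
      rw [e]
      exact add_mem (AddSubmonoid.subset_closure m1) (AddSubmonoid.subset_closure m4)
    · have e : (![1,1,1,1,1,1] : Fin 6 → ℤ) = δ₆ := by decide
      rw [e]
      exact AddSubmonoid.subset_closure m6
    · have e : (![1,1,1,2,1,0] : Fin 6 → ℤ) = ![0,1,0,1,1,0] + ![1,0,1,1,0,0] := by decide
      rw [e]
      exact add_mem (AddSubmonoid.subset_closure m3) (AddSubmonoid.subset_closure m5)
    · have e : (![1,1,2,2,2,1] : Fin 6 → ℤ) = δ₆ + ![0,0,1,1,1,0] := by decide
      rw [e]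
      exact add_mem (AddSubmonoid.subset_closure m6) (AddSubmonoid.subset_closure m2)
end
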